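/- arXiv:0706.1339 — 3 statements merged into one kernel-verified Lean document; each statement's English description precedes it below -/
import Mathlib

section
/- Let T > 0, C > 0, k ≥ 0, m > k with m ≥ 2, K > 0 and λ, ε, β > 0. Let w : (0,T)×H → ℝ be bounded on bounded subsets of (0,T)×H and satisfy w(t,x) ≤ C(1+‖x‖^k) for all (t,x) ∈ (0,T)×H. Then for every R > 0 there exists a constant M > 0 such that the sup-convolution v = w^{λ,ε,β} satisfies |v(t,x) − v(s,y)| ≤ M(|t−s| + ‖x−y‖_{-2}) for all t,s ∈ (0,T) and all x,y ∈ B_R. -/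
open scoped InnerProductSpace

/-- The sup-convolution
`w^{λ,ε,β}(t,x) = sup_{(s,y)∈(0,T)×H} { w(s,y) − ‖x−y‖₋₁²/(2ε) − (t−s)²/(2β) − λ e^{2mK(T−s)}‖y‖^m }`,
where `‖z‖₋₁² = ⟨Bz,z⟩`. -/
noncomputable def supConv {H : Type*} [NormedAddCommGroup H] [InnerProductSpace ℝ H]
    (B : H →L[ℝ] H) (T m K lam ε β : ℝ) (w : ℝ → H → ℝ) (t : ℝ) (x : H) : ℝ :=
  sSup ((fun p : ℝ × H =>
      w p.1 p.2 - ⟪B (x - p.2), x - p.2⟫_ℝ / (2 * ε) - (t - p.1) ^ 2 / (2 * β)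
        - lam * Real.exp (2 * m * K * (T - p.1)) * ‖p.2‖ ^ m) ''
    (Set.Ioo 0 T ×ˢ (Set.univ : Set H)))

/-- The integrand of the sup-convolution, as an auxiliary function. -/
noncomputable def fAux {H : Type*} [NormedAddCommGroup H] [InnerProductSpace ℝ H]
    (B : H →L[ℝ] H) (T m K lam ε β : ℝ) (w : ℝ → H → ℝ) (t : ℝ) (x : H) (p : ℝ × H) : ℝ :=
  w p.1 p.2 - ⟪B (x - p.2), x - p.2⟫_ℝ / (2 * ε) - (t - p.1) ^ 2 / (2 * β)
    - lam * Real.exp (2 * m * K * (T - p.1)) * ‖p.2‖ ^ m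

lemma supConv_eq_fAux {H : Type*} [NormedAddCommGroup H] [InnerProductSpace ℝ H]
    (B : H →L[ℝ] H) (T m K lam ε β : ℝ) (w : ℝ → H → ℝ) (t : ℝ) (x : H) :
    supConv B T m K lam ε β w t x
      = sSup (fAux B T m K lam ε β w t x '' (Set.Ioo 0 T ×ˢ (Set.univ : Set H))) := rfl

/-- Lemma 4.2(i) (sup-convolution case): if `w` is bounded on bounded sets and
`w(t,x) ≤ C(1+‖x‖^k)` with `k < m`, then for every `R > 0` the sup-convolution
`v = w^{λ,ε,β}` satisfies `|v(t,x) − v(s,y)| ≤ M(|t−s| + ‖x−y‖₋₂)` on `(0,T) × B_R`,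
where `‖z‖₋₂ = ‖Bz‖`. -/
theorem supConv_lipschitz_estimate
    {H : Type*} [NormedAddCommGroup H] [InnerProductSpace ℝ H] [CompleteSpace H]
    [TopologicalSpace.SeparableSpace H]
    (B : H →L[ℝ] H) (hBsa : IsSelfAdjoint B) (hBpos : ∀ x : H, 0 ≤ ⟪B x, x⟫_ℝ)
    (T C k m K lam ε β : ℝ)
    (hT : 0 < T) (hC : 0 < C) (hk : 0 ≤ k) (hkm : k < m) (hm : 2 ≤ m)
    (hK : 0 < K) (hlam : 0 < lam) (hε : 0 < ε) (hβ : 0 < β)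
    (w : ℝ → H → ℝ)
    (hbdd : ∀ R > (0 : ℝ), ∃ M : ℝ, ∀ t ∈ Set.Ioo (0 : ℝ) T, ∀ x : H, ‖x‖ ≤ R → |w t x| ≤ M)
    (hgrowth : ∀ t ∈ Set.Ioo (0 : ℝ) T, ∀ x : H, w t x ≤ C * (1 + ‖x‖ ^ k)) :
    ∀ R > (0 : ℝ), ∃ M > (0 : ℝ), ∀ t ∈ Set.Ioo (0 : ℝ) T, ∀ s ∈ Set.Ioo (0 : ℝ) T,
      ∀ x y : H, ‖x‖ < R → ‖y‖ < R →
        |supConv B T m K lam ε β w t x - supConv B T m K lam ε β w s y|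
          ≤ M * (|t - s| + ‖B (x - y)‖) := by
  intro R hR
  obtain ⟨M₀, hM₀⟩ := hbdd R hR
  have hm0 : (0 : ℝ) < m := by linarith
  obtain ⟨dom, hdomdef⟩ : ∃ d : Set (ℝ × H), d = Set.Ioo 0 T ×ˢ (Set.univ : Set H) := ⟨_, rfl⟩
  have hdommem : ∀ p : ℝ × H, p.1 ∈ Set.Ioo (0 : ℝ) T → p ∈ dom := by
    rw [hdomdef]; exact fun p hp => ⟨hp, trivial⟩
  have hdommem' : ∀ p : ℝ × H, p ∈ dom → p.1 ∈ Set.Ioo (0 : ℝ) T := by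
    rw [hdomdef]; exact fun p hp => hp.1
  obtain ⟨f, hfdef⟩ : ∃ g : ℝ → H → ℝ × H → ℝ, g = fAux B T m K lam ε β w := ⟨_, rfl⟩
  obtain ⟨L, hLdef⟩ : ∃ L : ℝ, L = -(M₀ + lam * Real.exp (2 * m * K * T) * R ^ m) := ⟨_, rfl⟩
  -- the function `r ↦ C + C r^k - λ r^m` tends to `-∞`
  have htend : Filter.Tendsto (fun r : ℝ => C + C * r ^ k - lam * r ^ m)
      Filter.atTop Filter.atBot := by
    have h1 : Filter.Tendsto (fun r : ℝ => r ^ (-(m - k))) Filter.atTop (nhds 0) :=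
      tendsto_rpow_neg_atTop (by linarith)
    have h2 : Filter.Tendsto (fun r : ℝ => C * r ^ (-(m - k)) - lam) Filter.atTop
        (nhds (C * 0 - lam)) := (h1.const_mul C).sub_const lam
    have h3 : Filter.Tendsto (fun r : ℝ => r ^ m * (C * r ^ (-(m - k)) - lam))
        Filter.atTop Filter.atBot :=
      (tendsto_rpow_atTop hm0).atTop_mul_neg (by linarith) h2
    have h4 := Filter.tendsto_atBot_add_const_left Filter.atTop C h3
    refine h4.congr' ?_
    filter_upwards [Filter.eventually_gt_atTop (0 : ℝ)] with r hr
    have hrm : r ^ m * r ^ (-(m - k)) = r ^ k := by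
      rw [← Real.rpow_add hr]; norm_num
    calc C + r ^ m * (C * r ^ (-(m - k)) - lam)
        = C + C * (r ^ m * r ^ (-(m - k))) - lam * r ^ m := by ring
      _ = C + C * r ^ k - lam * r ^ m := by rw [hrm]
  obtain ⟨r₁, hr₁⟩ := Filter.eventually_atTop.mp
    (htend.eventually (Filter.eventually_le_atBot (L - 2)))
  obtain ⟨r₀, hr₀def⟩ : ∃ r : ℝ, r = max r₁ 0 := ⟨_, rfl⟩
  have hr₀0 : (0 : ℝ) ≤ r₀ := hr₀def ▸ le_max_right _ _
  have hr₀ : ∀ r ≥ r₀, C + C * r ^ k - lam * r ^ m ≤ L - 2 := fun r hr =>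
    hr₁ r (le_trans (le_max_left _ _) (hr₀def ▸ hr))
  -- pointwise upper bound on the integrand
  have hup : ∀ (t : ℝ) (x : H) (p : ℝ × H), p ∈ dom →
      f t x p ≤ C + C * ‖p.2‖ ^ k - lam * ‖p.2‖ ^ m := by
    intro t x p hp
    have hp1 : p.1 ∈ Set.Ioo (0 : ℝ) T := hdommem' p hp
    have h1 : w p.1 p.2 ≤ C * (1 + ‖p.2‖ ^ k) := hgrowth p.1 hp1 p.2
    have h2 : 0 ≤ ⟪B (x - p.2), x - p.2⟫_ℝ := hBpos _
    have h3 : 0 ≤ (t - p.1) ^ 2 := sq_nonneg _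
    have hexp : (1 : ℝ) ≤ Real.exp (2 * m * K * (T - p.1)) := by
      apply Real.one_le_exp
      have : (0 : ℝ) ≤ T - p.1 := by linarith [hp1.2]
      positivity
    have hpow : (0 : ℝ) ≤ ‖p.2‖ ^ m := Real.rpow_nonneg (norm_nonneg _) m
    have h4 : lam * ‖p.2‖ ^ m ≤ lam * Real.exp (2 * m * K * (T - p.1)) * ‖p.2‖ ^ m := by
      have hl : lam ≤ lam * Real.exp (2 * m * K * (T - p.1)) :=
        le_mul_of_one_le_right hlam.le hexp
      exact mul_le_mul_of_nonneg_right hl hpow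
    have h5 : 0 ≤ ⟪B (x - p.2), x - p.2⟫_ℝ / (2 * ε) := by positivity
    have h6 : 0 ≤ (t - p.1) ^ 2 / (2 * β) := by positivity
    simp only [hfdef, fAux]
    nlinarith
  -- boundedness above of the relevant sets
  have hbddA : ∀ (t : ℝ) (x : H), BddAbove (f t x '' dom) := by
    intro t x
    refine ⟨max (C + C * r₀ ^ k) (L - 2), ?_⟩
    rintro z ⟨p, hp, rfl⟩
    have h := hup t x p hp
    rcases le_or_gt ‖p.2‖ r₀ with hc | hc
    · have h1 : C * ‖p.2‖ ^ k ≤ C * r₀ ^ k :=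
        mul_le_mul_of_nonneg_left (Real.rpow_le_rpow (norm_nonneg _) hc hk) hC.le
      have h2 : (0 : ℝ) ≤ lam * ‖p.2‖ ^ m :=
        mul_nonneg hlam.le (Real.rpow_nonneg (norm_nonneg _) m)
      exact le_trans (by linarith) (le_max_left _ _)
    · exact le_trans (by linarith [hr₀ _ hc.le]) (le_max_right _ _)
  have hne : ∀ (t : ℝ) (x : H), (f t x '' dom).Nonempty := by
    intro t x
    exact ⟨f t x (T / 2, 0), ⟨(T / 2, 0),
      hdommem (T / 2, 0) ⟨by simpa using by linarith, by simpa using by linarith⟩, rfl⟩⟩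
  -- lower bound on the sup-convolution
  have hlow : ∀ t ∈ Set.Ioo (0 : ℝ) T, ∀ x : H, ‖x‖ < R → L ≤ sSup (f t x '' dom) := by
    intro t ht x hx
    refine le_trans ?_ (le_csSup (hbddA t x) ⟨(t, x), hdommem (t, x) ht, rfl⟩)
    have hfx : f t x (t, x) = w t x - lam * Real.exp (2 * m * K * (T - t)) * ‖x‖ ^ m := by
      simp [hfdef, fAux, sub_self]
    rw [hfx]
    have h1 : -M₀ ≤ w t x := neg_le_of_abs_le (hM₀ t ht x hx.le)
    have h2 : Real.exp (2 * m * K * (T - t)) ≤ Real.exp (2 * m * K * T) := by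
      apply Real.exp_le_exp.mpr
      have h2mk : (0 : ℝ) ≤ 2 * m * K := by positivity
      nlinarith [ht.1]
    have h3 : ‖x‖ ^ m ≤ R ^ m := Real.rpow_le_rpow (norm_nonneg _) hx.le hm0.le
    have h4 : (0 : ℝ) ≤ R ^ m := Real.rpow_nonneg hR.le m
    have hep : (0 : ℝ) ≤ lam * Real.exp (2 * m * K * (T - t)) := by positivity
    have s1 : lam * Real.exp (2 * m * K * (T - t)) * ‖x‖ ^ m
        ≤ lam * Real.exp (2 * m * K * (T - t)) * R ^ m :=
      mul_le_mul_of_nonneg_left h3 hep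
    have s2 : lam * Real.exp (2 * m * K * (T - t)) * R ^ m
        ≤ lam * Real.exp (2 * m * K * T) * R ^ m :=
      mul_le_mul_of_nonneg_right (mul_le_mul_of_nonneg_left h2 hlam.le) h4
    rw [hLdef]
    linarith
  -- the Lipschitz constant
  obtain ⟨M, hMdef⟩ : ∃ M : ℝ, M = (R + r₀) / ε + T / β + 1 := ⟨_, rfl⟩
  have hc1 : (0 : ℝ) ≤ (R + r₀) / ε := div_nonneg (by linarith) hε.le
  have hc2 : (0 : ℝ) ≤ T / β := div_nonneg hT.le hβ.le
  have hM : (0 : ℝ) < M := by rw [hMdef]; linarith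
  -- symmetry identity for the quadratic form
  have hsym : ∀ u v : H, ⟪B u, u⟫_ℝ - ⟪B v, v⟫_ℝ = ⟪B (u - v), u + v⟫_ℝ := by
    intro u v
    have hB := ContinuousLinearMap.isSelfAdjoint_iff_isSymmetric.mp hBsa
    have h1 : ⟪B u, v⟫_ℝ = ⟪u, B v⟫_ℝ := hB u v
    have h2 : ⟪u, B v⟫_ℝ = ⟪B v, u⟫_ℝ := real_inner_comm _ _
    rw [map_sub, inner_sub_left, inner_add_right, inner_add_right]
    linarith
  -- one-sided estimate
  have hone : ∀ t ∈ Set.Ioo (0 : ℝ) T, ∀ s ∈ Set.Ioo (0 : ℝ) T, ∀ x y : H,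
      ‖x‖ < R → ‖y‖ < R →
      sSup (f t x '' dom) ≤ sSup (f s y '' dom) + M * (|t - s| + ‖B (x - y)‖) := by
    intro t ht s hs x y hx hy
    have hD0 : 0 ≤ M * (|t - s| + ‖B (x - y)‖) :=
      mul_nonneg hM.le (add_nonneg (abs_nonneg _) (norm_nonneg _))
    refine csSup_le (hne t x) ?_
    rintro z ⟨p, hp, rfl⟩
    have hp1 : p.1 ∈ Set.Ioo (0 : ℝ) T := hdommem' p hp
    rcases le_or_gt ‖p.2‖ r₀ with hc | hc
    · -- the difference estimate on the bounded region
      have hinner : ⟪B (y - p.2), y - p.2⟫_ℝ - ⟪B (x - p.2), x - p.2⟫_ℝ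
          ≤ ‖B (x - y)‖ * (2 * R + 2 * r₀) := by
        rw [hsym]
        have h1 : (y - p.2) - (x - p.2) = y - x := by abel
        rw [h1]
        have h2 : ‖B (y - x)‖ = ‖B (x - y)‖ := by
          rw [show y - x = -(x - y) by abel, map_neg, norm_neg]
        calc ⟪B (y - x), (y - p.2) + (x - p.2)⟫_ℝ
            ≤ ‖B (y - x)‖ * ‖(y - p.2) + (x - p.2)‖ := real_inner_le_norm _ _
          _ ≤ ‖B (x - y)‖ * (2 * R + 2 * r₀) := by
              rw [h2]
              apply mul_le_mul_of_nonneg_left _ (norm_nonneg _)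
              calc ‖(y - p.2) + (x - p.2)‖ ≤ ‖y - p.2‖ + ‖x - p.2‖ := norm_add_le _ _
                _ ≤ (‖y‖ + ‖p.2‖) + (‖x‖ + ‖p.2‖) := by
                    gcongr <;> exact norm_sub_le _ _
                _ ≤ 2 * R + 2 * r₀ := by linarith
      have htime : (s - p.1) ^ 2 - (t - p.1) ^ 2 ≤ |t - s| * (2 * T) := by
        have h1 : (s - p.1) ^ 2 - (t - p.1) ^ 2 = (s - t) * (s + t - 2 * p.1) := by ring
        have h3 : |s + t - 2 * p.1| ≤ 2 * T := by
          rw [abs_le]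
          constructor <;> [linarith [hs.1, ht.1, hp1.2]; linarith [hs.2, ht.2, hp1.1]]
        calc (s - p.1) ^ 2 - (t - p.1) ^ 2 = (s - t) * (s + t - 2 * p.1) := h1
          _ ≤ |(s - t) * (s + t - 2 * p.1)| := le_abs_self _
          _ = |s - t| * |s + t - 2 * p.1| := abs_mul _ _
          _ ≤ |t - s| * (2 * T) := by
              rw [abs_sub_comm s t]
              exact mul_le_mul_of_nonneg_left h3 (abs_nonneg _)
      have hdiff : f t x p - f s y p ≤ M * (|t - s| + ‖B (x - y)‖) := by
        have expand : f t x p - f s y p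
            = (⟪B (y - p.2), y - p.2⟫_ℝ - ⟪B (x - p.2), x - p.2⟫_ℝ) / (2 * ε)
              + ((s - p.1) ^ 2 - (t - p.1) ^ 2) / (2 * β) := by
          simp only [hfdef, fAux]; ring
        rw [expand]
        have e1 : (⟪B (y - p.2), y - p.2⟫_ℝ - ⟪B (x - p.2), x - p.2⟫_ℝ) / (2 * ε)
            ≤ ‖B (x - y)‖ * ((R + r₀) / ε) := by
          have h' : (⟪B (y - p.2), y - p.2⟫_ℝ - ⟪B (x - p.2), x - p.2⟫_ℝ) / (2 * ε)
              ≤ (‖B (x - y)‖ * (2 * R + 2 * r₀)) / (2 * ε) := by gcongr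
          refine h'.trans (le_of_eq ?_)
          field_simp
        have e2 : ((s - p.1) ^ 2 - (t - p.1) ^ 2) / (2 * β) ≤ |t - s| * (T / β) := by
          have h' : ((s - p.1) ^ 2 - (t - p.1) ^ 2) / (2 * β)
              ≤ (|t - s| * (2 * T)) / (2 * β) := by gcongr
          refine h'.trans (le_of_eq ?_)
          field_simp
        have hn1 : (0 : ℝ) ≤ ‖B (x - y)‖ := norm_nonneg _
        have hn2 : (0 : ℝ) ≤ |t - s| := abs_nonneg _
        rw [hMdef]
        nlinarith [mul_nonneg hc1 hn2, mul_nonneg hc2 hn1, mul_nonneg hn1 hn2]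
      have hmem : f s y p ∈ f s y '' dom := ⟨p, hp, rfl⟩
      have := le_csSup (hbddA s y) hmem
      linarith
    · have h := hup t x p hp
      have h2 := hr₀ _ hc.le
      have h3 := hlow s hs y hy
      linarith
  -- conclusion
  refine ⟨M, hM, ?_⟩
  intro t ht s hs x y hx hy
  rw [supConv_eq_fAux B T m K lam ε β w t x, supConv_eq_fAux B T m K lam ε β w s y,
    ← hfdef, ← hdomdef, abs_sub_le_iff]
  constructor
  · have := hone t ht s hs x y hx hy
    linarith
  · have := hone s hs t ht y x hy hx
    have h1 : |s - t| = |t - s| := abs_sub_comm _ _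
    have h2 : ‖B (y - x)‖ = ‖B (x - y)‖ := by
      rw [show y - x = -(x - y) by abel, map_neg, norm_neg]
    rw [h1, h2] at this
    linarith
end

section
/- Let T > 0, C > 0, k ≥ 0, m > k with m ≥ 2, K > 0 and λ, ε, β > 0. Let w : (0,T)×H → ℝ be bounded on bounded subsets of (0,T)×H and satisfy w(t,x) ≤ C(1+‖x‖^k) for all (t,x) ∈ (0,T)×H. Then for every R > 0 there exists M > 0 such that whenever the sup-convolution v = w^{λ,ε,β} is Fréchet differentiable at a point (t,x) ∈ (0,T)×B_R, one has |v_t(t,x)| ≤ M and there exists q ∈ H with ‖q‖ ≤ M such that the spatial Fréchet derivative satisfies Dv(t,x) = Bq. -/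
open scoped InnerProductSpace

open Filter in
lemma exists_rho_supconv (C lam k m L : ℝ) (hlam : 0 < lam) (hk : 0 ≤ k)
    (hkm : k < m) : ∃ ρ : ℝ, 1 ≤ ρ ∧ ∀ r, ρ ≤ r → C * (1 + r ^ k) - lam * r ^ m < -L := by
  have hm : 0 < m := lt_of_le_of_lt hk hkm
  have h1 : Tendsto (fun r : ℝ => r ^ m) atTop atTop := tendsto_rpow_atTop hm
  have h2 : Tendsto (fun r : ℝ => lam - C * r ^ (k - m)) atTop (nhds lam) := by
    have : Tendsto (fun r : ℝ => r ^ (k - m)) atTop (nhds 0) := by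
      have := tendsto_rpow_neg_atTop (y := m - k) (by linarith)
      simpa [neg_sub] using this
    have := (this.const_mul C).const_sub lam
    simpa using this
  have h3 : Tendsto (fun r : ℝ => r ^ m * (lam - C * r ^ (k - m))) atTop atTop :=
    h1.atTop_mul_pos hlam h2
  have h4 : Tendsto (fun r : ℝ => lam * r ^ m - C * r ^ k) atTop atTop := by
    apply h3.congr'
    filter_upwards [eventually_gt_atTop (0:ℝ)] with r hr
    rw [mul_sub, mul_comm (r ^ m) lam]
    congr 1
    rw [mul_comm (r^m), mul_assoc, ← Real.rpow_add hr]
    ring_nf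
  obtain ⟨ρ₀, hρ₀⟩ := (tendsto_atTop_atTop.mp h4) (C + L + 1)
  refine ⟨max 1 ρ₀, le_max_left _ _, fun r hr => ?_⟩
  have := hρ₀ r (le_trans (le_max_right _ _) hr)
  nlinarith

set_option maxHeartbeats 1000000 in
/-- Lemma 4.2(iii) (sup-convolution case): for every `R > 0` there is `M > 0` such that at
every point `(t,x) ∈ (0,T) × B_R` of Fréchet differentiability of `v = w^{λ,ε,β}` one has
`|v_t(t,x)| ≤ M` and `Dv(t,x) = Bq` for some `q` with `‖q‖ ≤ M`. -/
theorem supConv_derivative_structure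
    {H : Type*} [NormedAddCommGroup H] [InnerProductSpace ℝ H] [CompleteSpace H]
    [TopologicalSpace.SeparableSpace H]
    (B : H →L[ℝ] H) (hBsa : IsSelfAdjoint B) (hBpos : ∀ x : H, 0 ≤ ⟪B x, x⟫_ℝ)
    (T C k m K lam ε β : ℝ)
    (hT : 0 < T) (hC : 0 < C) (hk : 0 ≤ k) (hkm : k < m) (hm : 2 ≤ m)
    (hK : 0 < K) (hlam : 0 < lam) (hε : 0 < ε) (hβ : 0 < β)
    (w : ℝ → H → ℝ)
    (hbdd : ∀ R > (0 : ℝ), ∃ M : ℝ, ∀ t ∈ Set.Ioo (0 : ℝ) T, ∀ x : H, ‖x‖ ≤ R → |w t x| ≤ M)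
    (hgrowth : ∀ t ∈ Set.Ioo (0 : ℝ) T, ∀ x : H, w t x ≤ C * (1 + ‖x‖ ^ k)) :
    ∀ R > (0 : ℝ), ∃ M > (0 : ℝ), ∀ t ∈ Set.Ioo (0 : ℝ) T, ∀ x : H, ‖x‖ < R →
      ∀ D : ℝ × H →L[ℝ] ℝ,
        HasFDerivAt (fun p : ℝ × H => supConv B T m K lam ε β w p.1 p.2) D (t, x) →
          |D ((1 : ℝ), (0 : H))| ≤ M ∧
          ∃ q : H, ‖q‖ ≤ M ∧ ∀ h : H, D ((0 : ℝ), h) = ⟪B q, h⟫_ℝ := by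
  have hsymm : ∀ a b : H, ⟪B a, b⟫_ℝ = ⟪a, B b⟫_ℝ :=
    (ContinuousLinearMap.isSelfAdjoint_iff_isSymmetric.mp hBsa)
  have hm0 : (0:ℝ) < m := lt_of_le_of_lt hk hkm
  intro R hR
  obtain ⟨Mw, hMw⟩ := hbdd R hR
  have hMw0 : 0 ≤ Mw :=
    le_trans (abs_nonneg _) (hMw (T/2) ⟨by linarith, by linarith⟩ 0 (by simp [le_of_lt hR]))
  obtain ⟨L₀, hL₀def⟩ : ∃ L₀ : ℝ,
      L₀ = Mw + ‖B‖ / (2*ε) + 1/(2*β) + lam * Real.exp (2*m*K*T) * R ^ m := ⟨_, rfl⟩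
  have hL₀0 : 0 ≤ L₀ := by
    have h1 : 0 ≤ ‖B‖ / (2*ε) := div_nonneg (norm_nonneg _) (by linarith)
    have h2 : 0 ≤ lam * Real.exp (2*m*K*T) * R ^ m :=
      mul_nonneg (mul_nonneg hlam.le (Real.exp_pos _).le) (Real.rpow_nonneg hR.le _)
    have h3 : 0 ≤ 1/(2*β) := by positivity
    linarith [hL₀def.ge, hL₀def.le]
  obtain ⟨ρ, hρ1, hρ⟩ := exists_rho_supconv C lam k m (L₀ + 1) hlam hk hkm
  have hcnn : (0:ℝ) ≤ (ρ + R) / ε := div_nonneg (by linarith) hε.le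
  have hMpos : 0 < T / β + (ρ + R) / ε := by
    have : 0 < T / β := div_pos hT hβ
    linarith
  refine ⟨T / β + (ρ + R) / ε, hMpos, ?_⟩
  intro t ht x hx D hD
  -- the function family and the sets
  set G : ℝ × H → ℝ × H → ℝ := fun q p =>
      w q.1 q.2 - ⟪B (p.2 - q.2), p.2 - q.2⟫_ℝ / (2 * ε) - (p.1 - q.1) ^ 2 / (2 * β)
        - lam * Real.exp (2 * m * K * (T - q.1)) * ‖q.2‖ ^ m with hGdef
  set S : ℝ × H → Set ℝ := fun p => (fun q : ℝ × H => G q p) '' (Set.Ioo 0 T ×ˢ Set.univ)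
    with hSdef
  set v : ℝ × H → ℝ := fun p : ℝ × H => supConv B T m K lam ε β w p.1 p.2 with hvdef
  have hvS : ∀ p : ℝ × H, v p = sSup (S p) := fun p => rfl
  -- upper bound for each member of the family
  have h_ub : ∀ q ∈ Set.Ioo (0:ℝ) T ×ˢ (Set.univ : Set H), ∀ p : ℝ × H,
      G q p ≤ C * (1 + ‖q.2‖ ^ k) - lam * ‖q.2‖ ^ m := by
    intro q hq p
    have hw : w q.1 q.2 ≤ C * (1 + ‖q.2‖ ^ k) := hgrowth q.1 hq.1 q.2
    have h1 : 0 ≤ ⟪B (p.2 - q.2), p.2 - q.2⟫_ℝ / (2*ε) := div_nonneg (hBpos _) (by linarith)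
    have h2 : 0 ≤ (p.1 - q.1)^2 / (2*β) := div_nonneg (sq_nonneg _) (by linarith)
    have h3 : lam * ‖q.2‖ ^ m ≤ lam * Real.exp (2*m*K*(T - q.1)) * ‖q.2‖ ^ m := by
      have he : (1:ℝ) ≤ Real.exp (2*m*K*(T - q.1)) := by
        apply Real.one_le_exp
        have : 0 ≤ T - q.1 := by have := hq.1.2; linarith
        positivity
      have hn : 0 ≤ ‖q.2‖ ^ m := Real.rpow_nonneg (norm_nonneg _) _
      calc lam * ‖q.2‖ ^ m = lam * 1 * ‖q.2‖ ^ m := by ring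
        _ ≤ lam * Real.exp (2*m*K*(T - q.1)) * ‖q.2‖ ^ m :=
            mul_le_mul_of_nonneg_right (mul_le_mul_of_nonneg_left he hlam.le) hn
    simp only [hGdef]
    linarith
  have hA : ∀ r : ℝ, 0 ≤ r → C * (1 + r ^ k) - lam * r ^ m ≤ C * (1 + ρ ^ k) := by
    intro r hr
    rcases le_total r ρ with h | h
    · have h1 : r ^ k ≤ ρ ^ k := Real.rpow_le_rpow hr h hk
      have h2 : 0 ≤ lam * r ^ m := mul_nonneg hlam.le (Real.rpow_nonneg hr _)
      nlinarith
    · have := hρ r h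
      have h2 : 0 ≤ ρ ^ k := Real.rpow_nonneg (by linarith) _
      nlinarith
  have hSne : ∀ p : ℝ × H, (S p).Nonempty := by
    intro p
    exact ⟨G (T/2, 0) p, Set.mem_image_of_mem _ (by
      exact ⟨⟨by linarith, by linarith⟩, trivial⟩)⟩
  have hSbdd : ∀ p : ℝ × H, BddAbove (S p) := by
    intro p
    refine ⟨C * (1 + ρ ^ k), ?_⟩
    rintro e ⟨q, hq, rfl⟩
    exact le_trans (h_ub q hq p) (hA _ (norm_nonneg _))
  -- lower bound for v near (t,x)
  have hvge : ∀ p : ℝ × H, |p.1 - t| ≤ 1 → ‖p.2 - x‖ ≤ 1 → -L₀ ≤ v p := by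
    intro p hp1 hp2
    have hmem : G (t, x) p ∈ S p :=
      Set.mem_image_of_mem _ (by exact ⟨ht, trivial⟩)
    have hle : G (t, x) p ≤ v p := by rw [hvS]; exact le_csSup (hSbdd p) hmem
    refine le_trans ?_ hle
    have hw : -Mw ≤ w t x := (abs_le.mp (hMw t ht x hx.le)).1
    have h2e : (0:ℝ) < 2*ε := by linarith
    have h2b : (0:ℝ) < 2*β := by linarith
    have hq1 : ⟪B (p.2 - x), p.2 - x⟫_ℝ / (2*ε) ≤ ‖B‖ / (2*ε) := by
      rw [div_le_div_iff_of_pos_right h2e]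
      calc ⟪B (p.2 - x), p.2 - x⟫_ℝ ≤ ‖B (p.2 - x)‖ * ‖p.2 - x‖ := real_inner_le_norm _ _
        _ ≤ (‖B‖ * ‖p.2 - x‖) * ‖p.2 - x‖ :=
            mul_le_mul_of_nonneg_right (B.le_opNorm _) (norm_nonneg _)
        _ ≤ (‖B‖ * 1) * 1 := by
            have h0 : 0 ≤ ‖p.2 - x‖ := norm_nonneg _
            have hn2 : ‖p.2 - x‖ * ‖p.2 - x‖ ≤ 1 * 1 :=
              mul_le_mul hp2 hp2 h0 zero_le_one
            have := mul_le_mul_of_nonneg_left hn2 (norm_nonneg (B : H →L[ℝ] H))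
            nlinarith
        _ = ‖B‖ := by ring
    have hq2 : (p.1 - t)^2 / (2*β) ≤ 1/(2*β) := by
      rw [div_le_div_iff_of_pos_right h2b]
      have := abs_le.mp hp1
      nlinarith
    have hq3 : lam * Real.exp (2*m*K*(T - t)) * ‖x‖ ^ m ≤ lam * Real.exp (2*m*K*T) * R ^ m := by
      have he : Real.exp (2*m*K*(T - t)) ≤ Real.exp (2*m*K*T) := by
        apply Real.exp_le_exp.mpr
        have h1 : (0:ℝ) ≤ 2*m*K := by positivity
        have h2 : T - t ≤ T := by have := ht.1; linarith
        exact mul_le_mul_of_nonneg_left h2 h1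
      have hx' : ‖x‖ ^ m ≤ R ^ m := Real.rpow_le_rpow (norm_nonneg _) hx.le hm0.le
      have h1 : 0 ≤ ‖x‖ ^ m := Real.rpow_nonneg (norm_nonneg _) _
      have h2 : 0 < Real.exp (2*m*K*(T-t)) := Real.exp_pos _
      exact mul_le_mul (mul_le_mul_of_nonneg_left he hlam.le) hx' h1
        (by positivity)
    simp only [hGdef]
    rw [hL₀def]
    linarith
  -- the key directional inequality
  have key : ∀ τ : ℝ, ∀ h : H, D (τ, h) ≤ |τ| * T / β + (ρ + R) * ‖B h‖ / ε := by
    intro τ h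
    set u : ℝ × H := (τ, h) with hudef
    obtain ⟨σ, hσdef⟩ : ∃ σ : ℝ, σ = |τ| * T / β + (ρ + R) * ‖B h‖ / ε := ⟨_, rfl⟩
    rw [← hσdef]
    obtain ⟨r₀, hr₀def⟩ : ∃ r₀ : ℝ, r₀ = (1 + |τ| + ‖h‖)⁻¹ := ⟨_, rfl⟩
    have hden : (0:ℝ) < 1 + |τ| + ‖h‖ := by positivity
    have hr₀pos : 0 < r₀ := by rw [hr₀def]; exact inv_pos.mpr hden
    -- quadratic expansion helper
    have hexp : ∀ (a : H) (r : ℝ),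
        ⟪B (a + r • h), a + r • h⟫_ℝ
          = ⟪B a, a⟫_ℝ + 2*r*⟪B a, h⟫_ℝ + r^2 * ⟪B h, h⟫_ℝ := by
      intro a r
      have hba : ⟪B (r • h), a⟫_ℝ = r * ⟪B a, h⟫_ℝ := by
        rw [map_smul, real_inner_smul_left, hsymm h a, real_inner_comm]
      rw [map_add, inner_add_left, inner_add_right, inner_add_right, hba,
        map_smul, real_inner_smul_left, real_inner_smul_right, real_inner_smul_right]
      ring
    -- the difference inequality
    have hineq : ∀ r : ℝ, 0 < r → r ≤ r₀ → v ((t, x) + r • u) - v (t, x) ≤ r * σ := by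
      intro r hr hrr₀
      have hr1 : r * (1 + |τ| + ‖h‖) ≤ 1 := by
        calc r * (1 + |τ| + ‖h‖) ≤ r₀ * (1 + |τ| + ‖h‖) := by nlinarith
          _ = 1 := by rw [hr₀def]; field_simp
      have habs1 : r * |τ| ≤ 1 := by nlinarith [abs_nonneg τ, norm_nonneg h]
      have habs2 : r * ‖h‖ ≤ 1 := by nlinarith [abs_nonneg τ, norm_nonneg h]
      have hp' : ((t, x) + r • u : ℝ × H) = (t + r * τ, x + r • h) := by
        simp [hudef, Prod.ext_iff]
      rw [hp']
      -- it suffices to prove the bound up to any δ ∈ (0,1]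
      have main : ∀ δ : ℝ, 0 < δ → δ ≤ 1 →
          v (t + r * τ, x + r • h) - v (t, x) ≤ r * σ + δ := by
        intro δ hδ hδ1
        have hlt : v (t + r * τ, x + r • h) - δ < sSup (S (t + r * τ, x + r • h)) := by
          rw [← hvS]; linarith
        obtain ⟨e, he, hlte⟩ := exists_lt_of_lt_csSup (hSne _) hlt
        obtain ⟨q, hqmem, rfl⟩ := he
        have hlte' : v (t + r * τ, x + r • h) - δ < G q (t + r * τ, x + r • h) := hlte
        -- bound on ‖q.2‖
        have hvlow : -L₀ ≤ v (t + r * τ, x + r • h) := by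
          apply hvge
          · show |t + r * τ - t| ≤ 1
            rw [add_sub_cancel_left, abs_mul, abs_of_pos hr]
            exact habs1
          · show ‖x + r • h - x‖ ≤ 1
            rw [add_sub_cancel_left, norm_smul, Real.norm_eq_abs, abs_of_pos hr]
            exact habs2
        have hGlow : -(L₀ + 1) ≤ G q (t + r * τ, x + r • h) := by linarith
        have hqnorm : ‖q.2‖ ≤ ρ := by
          by_contra hcon
          push_neg at hcon
          have := hρ ‖q.2‖ hcon.le
          have := h_ub q hqmem (t + r * τ, x + r • h)
          linarith
        -- v(t,x) ≥ G q (t,x)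
        have hvtx : G q (t, x) ≤ v (t, x) := by
          rw [hvS]
          exact le_csSup (hSbdd _) (Set.mem_image_of_mem _ hqmem)
        -- difference of G values
        have hdiff : G q (t + r * τ, x + r • h) - G q (t, x) ≤ r * σ := by
          have hXdiff : G q (t + r * τ, x + r • h) - G q (t, x)
              = -(2*r*⟪B (x - q.2), h⟫_ℝ + r^2*⟪B h, h⟫_ℝ) / (2*ε)
                - (2*(r*τ)*(t - q.1) + (r*τ)^2) / (2*β) := by
            simp only [hGdef]
            have e1 : x + r • h - q.2 = (x - q.2) + r • h := by abel
            have e2 : ⟪B (x + r • h - q.2), x + r • h - q.2⟫_ℝ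
                = ⟪B (x - q.2), x - q.2⟫_ℝ + 2*r*⟪B (x - q.2), h⟫_ℝ + r^2*⟪B h, h⟫_ℝ := by
              rw [e1, hexp]
            rw [e2]
            have e3 : (t + r * τ - q.1)^2 = (t - q.1)^2 + 2*(r*τ)*(t - q.1) + (r*τ)^2 := by
              ring
            rw [e3]
            field_simp
            ring
          rw [hXdiff]
          have hb1 : -(2*r*⟪B (x - q.2), h⟫_ℝ + r^2*⟪B h, h⟫_ℝ) / (2*ε)
              ≤ r * ((ρ + R) * ‖B h‖ / ε) := by
            have hip : -⟪B (x - q.2), h⟫_ℝ ≤ (ρ + R) * ‖B h‖ := by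
              have e4 : -⟪B (x - q.2), h⟫_ℝ = ⟪q.2 - x, B h⟫_ℝ := by
                rw [hsymm, ← inner_neg_left]
                congr 1
                abel
              rw [e4]
              calc ⟪q.2 - x, B h⟫_ℝ ≤ ‖q.2 - x‖ * ‖B h‖ := real_inner_le_norm _ _
                _ ≤ (ρ + R) * ‖B h‖ := by
                    apply mul_le_mul_of_nonneg_right ?_ (norm_nonneg _)
                    calc ‖q.2 - x‖ ≤ ‖q.2‖ + ‖x‖ := norm_sub_le _ _
                      _ ≤ ρ + R := by linarith [hx.le]
            have hq : 0 ≤ ⟪B h, h⟫_ℝ := hBpos h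
            rw [div_le_iff₀ (by linarith : (0:ℝ) < 2*ε)]
            have expand : r * ((ρ + R) * ‖B h‖ / ε) * (2*ε) = 2 * r * ((ρ + R) * ‖B h‖) := by
              field_simp
            rw [expand]
            nlinarith
          have hb2 : -(2*(r*τ)*(t - q.1) + (r*τ)^2) / (2*β) ≤ r * (|τ| * T / β) := by
            rw [div_le_iff₀ (by linarith : (0:ℝ) < 2*β)]
            have expand : r * (|τ| * T / β) * (2*β) = 2 * r * (|τ| * T) := by
              field_simp
            rw [expand]
            have h1 : -(τ * (t - q.1)) ≤ |τ| * T := by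
              have ha : |τ * (t - q.1)| ≤ |τ| * T := by
                rw [abs_mul]
                apply mul_le_mul_of_nonneg_left ?_ (abs_nonneg τ)
                rw [abs_le]
                have := ht.1; have := ht.2; have := hqmem.1.1; have := hqmem.1.2
                constructor <;> linarith
              linarith [(abs_le.mp ha).1, neg_abs_le (τ * (t - q.1))]
            nlinarith [sq_nonneg (r*τ)]
          calc -(2*r*⟪B (x - q.2), h⟫_ℝ + r^2*⟪B h, h⟫_ℝ) / (2*ε)
                - (2*(r*τ)*(t - q.1) + (r*τ)^2) / (2*β)
              ≤ r * ((ρ + R) * ‖B h‖ / ε) + r * (|τ| * T / β) :=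
                le_trans (le_of_eq (by ring)) (add_le_add hb1 hb2)
            _ = r * σ := by rw [hσdef]; ring
        linarith
      -- conclude by letting δ → 0
      have hall : ∀ δ : ℝ, 0 < δ → v (t + r * τ, x + r • h) - v (t, x) ≤ r * σ + δ := by
        intro δ hδ
        rcases le_total δ 1 with h1 | h1
        · exact main δ hδ h1
        · linarith [main 1 one_pos le_rfl]
      exact le_of_forall_pos_le_add hall
    -- differentiate along the line
    have hg : HasDerivAt (fun r : ℝ => ((t, x) + r • u : ℝ × H)) u 0 := by
      have h1 : HasDerivAt (fun r : ℝ => r • u) ((1:ℝ) • u) 0 :=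
        (hasDerivAt_id 0).smul_const u
      rw [one_smul] at h1
      exact h1.const_add (t, x)
    have hD' : HasFDerivAt v D ((fun r : ℝ => ((t, x) + r • u : ℝ × H)) 0) := by
      have h0 : ((t, x) + (0:ℝ) • u : ℝ × H) = (t, x) := by simp
      simpa [h0] using hD
    have hline : HasDerivAt (fun r : ℝ => v ((t, x) + r • u)) (D u) 0 :=
      hD'.comp_hasDerivAt (l := v) 0 hg
    have hslope : Filter.Tendsto (fun r : ℝ => (v ((t,x) + r • u) - v (t,x)) / r)
        (nhdsWithin 0 (Set.Ioi 0)) (nhds (D u)) := by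
      have h2 := (hasDerivAt_iff_tendsto_slope.mp hline).mono_left
        (nhdsWithin_mono 0 (fun r (hr : r ∈ Set.Ioi 0) =>
          Set.mem_compl_singleton_iff.mpr (ne_of_gt hr)))
      apply h2.congr
      intro r
      have h0 : ((t, x) + (0:ℝ) • u : ℝ × H) = (t, x) := by simp
      rw [slope_def_field, h0, sub_zero]
    apply le_of_tendsto hslope
    filter_upwards [Ioc_mem_nhdsGT hr₀pos] with r hr
    rw [div_le_iff₀ hr.1]
    calc v ((t,x) + r • u) - v (t,x) ≤ r * σ := hineq r hr.1 hr.2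
      _ = σ * r := mul_comm _ _
  -- conclusion
  constructor
  · rw [abs_le]
    constructor
    · have h1 := key (-1) 0
      have h2 : D ((-1:ℝ), (0:H)) = -D ((1:ℝ), (0:H)) := by
        rw [show ((-1:ℝ), (0:H)) = -((1:ℝ), (0:H)) by simp [Prod.ext_iff], map_neg]
      rw [h2] at h1
      simp only [map_zero, norm_zero, abs_neg, abs_one, mul_zero, zero_div,
        one_mul, add_zero] at h1
      linarith
    · have h1 := key 1 0
      simp only [map_zero, norm_zero, abs_one, mul_zero, zero_div, one_mul,
        add_zero] at h1
      linarith
  -- spatial derivative: construct q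
  · obtain ⟨c, hcdef⟩ : ∃ c : ℝ, c = (ρ + R) / ε := ⟨_, rfl⟩
    have hc0 : 0 ≤ c := hcdef ▸ hcnn
    set f : H →L[ℝ] ℝ := D.comp (ContinuousLinearMap.inr ℝ ℝ H) with hfdef
    have hfapp : ∀ h : H, f h = D ((0:ℝ), h) := fun h => rfl
    have hf : ∀ h : H, |f h| ≤ c * ‖B h‖ := by
      intro h
      have hce : (ρ + R) * ‖B h‖ / ε = c * ‖B h‖ := by rw [hcdef]; ring
      rw [abs_le]
      constructor
      · have h1 := key 0 (-h)
        rw [hfapp]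
        have h2 : D ((0:ℝ), -h) = -D ((0:ℝ), h) := by
          rw [show ((0:ℝ), -h) = -((0:ℝ), h) by simp [Prod.ext_iff], map_neg]
        rw [h2] at h1
        simp only [abs_zero, map_neg, norm_neg, zero_mul, zero_div, zero_add] at h1
        rw [hce] at h1
        linarith
      · have h1 := key 0 h
        rw [hfapp]
        simp only [abs_zero, zero_mul, zero_div, zero_add] at h1
        rw [hce] at h1
        exact h1
    have hwd : ∀ h h' : H, B h = B h' → f h = f h' := by
      intro h h' hbb
      have hb0 : B (h - h') = 0 := by rw [map_sub, hbb, sub_self]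
      have h1 := hf (h - h')
      rw [hb0, norm_zero, mul_zero] at h1
      have h2 : f h - f h' = 0 := by
        have h3 := abs_nonpos_iff.mp h1
        rw [map_sub] at h3
        exact h3
      linarith [sub_eq_zero.mp h2]
    set W : Submodule ℝ H := LinearMap.range (B : H →ₗ[ℝ] H) with hWdef
    have hmemW : ∀ h : H, B h ∈ W := fun h => ⟨h, rfl⟩
    have hchoose : ∀ z : W, B (Exists.choose z.2) = (z : H) := fun z => z.2.choose_spec
    have hφwd : ∀ (z : W) (h : H), B h = (z : H) → f (Exists.choose z.2) = f h := by
      intro z h hz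
      exact hwd _ _ (by rw [hchoose z, hz])
    set φ₀ : W →ₗ[ℝ] ℝ :=
      { toFun := fun z => f (Exists.choose z.2)
        map_add' := by
          intro z z'
          show f (Exists.choose (z + z').2)
            = f (Exists.choose z.2) + f (Exists.choose z'.2)
          have hzz : B (Exists.choose z.2 + Exists.choose z'.2) = ((z + z' : W) : H) := by
            rw [map_add, hchoose, hchoose]; rfl
          rw [hφwd (z + z') _ hzz, map_add]
        map_smul' := by
          intro a z
          show f (Exists.choose (a • z).2) = (RingHom.id ℝ) a • f (Exists.choose z.2)
          have hzz : B (a • Exists.choose z.2) = ((a • z : W) : H) := by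
            rw [map_smul, hchoose]; rfl
          rw [hφwd (a • z) _ hzz, map_smul]
          rfl } with hφ₀def
    have hφ₀bound : ∀ z : W, ‖φ₀ z‖ ≤ c * ‖z‖ := by
      intro z
      have h1 := hf (Exists.choose z.2)
      rw [hchoose z] at h1
      simpa [hφ₀def, Real.norm_eq_abs] using h1
    set φ : W →L[ℝ] ℝ := φ₀.mkContinuous c hφ₀bound with hφdef
    obtain ⟨g, hg_eq, hg_norm⟩ := exists_extension_norm_eq W φ
    have hφnorm : ‖φ‖ ≤ c := LinearMap.mkContinuous_norm_le φ₀ hc0 hφ₀bound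
    refine ⟨(InnerProductSpace.toDual ℝ H).symm g, ?_, ?_⟩
    · have h1 : ‖(InnerProductSpace.toDual ℝ H).symm g‖ = ‖g‖ :=
        LinearIsometryEquiv.norm_map _ g
      rw [h1, hg_norm]
      refine le_trans hφnorm ?_
      rw [hcdef]
      have : 0 < T / β := div_pos hT hβ
      linarith
    · intro h
      have h1 : D ((0:ℝ), h) = f h := rfl
      have h2 : f h = φ ⟨B h, hmemW h⟩ := by
        have e5 : φ ⟨B h, hmemW h⟩ = f (Exists.choose (hmemW h)) := rfl
        rw [e5, hφwd ⟨B h, hmemW h⟩ h rfl]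
      have h3 : (φ ⟨B h, hmemW h⟩ : ℝ) = g (B h) := (hg_eq ⟨B h, hmemW h⟩).symm
      have h4 : g (B h) = ⟪(InnerProductSpace.toDual ℝ H).symm g, B h⟫_ℝ := by
        rw [InnerProductSpace.toDual_symm_apply]
      rw [h1, h2, h3, h4, ← hsymm]
end

section
/- Let T > 0, C > 0, k ≥ 0, m > k with m ≥ 2, K > 0. Let w : (0,T)×H → ℝ be bounded on bounded subsets of (0,T)×H and satisfy w(t,x) ≤ C(1+‖x‖^k) for all (t,x) ∈ (0,T)×H. Then for every R > 0 and λ > 0 there exists N > 0 (independent of ε and β) such that for all ε, β > 0, all t ∈ (0,T) and all x ∈ H with ‖x‖ ≤ R one has w^{λ,ε,β}(t,x) = sup_{(s,y)∈(0,T)×H, ‖y‖≤N} { w(s,y) − ‖x−y‖_{-1}²/(2ε) − (t−s)²/(2β) − λ e^{2mK(T−s)} ‖y‖^m }, i.e. the supremum defining the sup-convolution may be restricted to points y with ‖y‖ ≤ N. -/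
open scoped InnerProductSpace

private lemma exists_loc (C D lam k m R : ℝ) (hC : 0 < C) (hD : 0 ≤ D) (hlam : 0 < lam)
    (hk : 0 ≤ k) (hkm : k < m) :
    ∃ N, max R 1 ≤ N ∧ ∀ r, N ≤ r → C * (1 + r ^ k) + D ≤ lam * r ^ m := by
  have hm0 : 0 < m := lt_of_le_of_lt hk hkm
  have hmk : 0 < m - k := by linarith
  set N0 : ℝ := (2 * (C + D) / lam) ^ m⁻¹ with hN0
  set N1 : ℝ := (2 * C / lam) ^ (m - k)⁻¹ with hN1
  refine ⟨max (max R 1) (max N0 N1), le_max_left _ _, ?_⟩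
  intro r hr
  have hr1 : (1 : ℝ) ≤ r := le_trans (le_trans (le_max_right R 1) (le_max_left _ _)) hr
  have hr0 : (0 : ℝ) < r := lt_of_lt_of_le one_pos hr1
  have hN00 : 0 ≤ N0 := Real.rpow_nonneg (by positivity) _
  have hN10 : 0 ≤ N1 := Real.rpow_nonneg (by positivity) _
  have h1 : 2 * (C + D) ≤ lam * r ^ m := by
    have h : N0 ^ m ≤ r ^ m :=
      Real.rpow_le_rpow hN00
        (le_trans (le_trans (le_max_left N0 N1) (le_max_right _ _)) hr) hm0.le
    rw [hN0, Real.rpow_inv_rpow (by positivity) hm0.ne'] at h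
    calc 2 * (C + D) = lam * (2 * (C + D) / lam) := by field_simp
    _ ≤ lam * r ^ m := by nlinarith
  have h2 : 2 * (C * r ^ k) ≤ lam * r ^ m := by
    have h3 : N1 ^ (m - k) ≤ r ^ (m - k) :=
      Real.rpow_le_rpow hN10
        (le_trans (le_trans (le_max_right N0 N1) (le_max_right _ _)) hr) hmk.le
    rw [hN1, Real.rpow_inv_rpow (by positivity) hmk.ne'] at h3
    have hsplit : r ^ m = r ^ k * r ^ (m - k) := by
      rw [← Real.rpow_add hr0]; ring_nf
    have hrk : (0 : ℝ) ≤ r ^ k := Real.rpow_nonneg hr0.le _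
    calc 2 * (C * r ^ k) = r ^ k * (2 * C / lam) * lam := by field_simp
    _ ≤ r ^ k * r ^ (m - k) * lam :=
      mul_le_mul_of_nonneg_right (mul_le_mul_of_nonneg_left h3 hrk) hlam.le
    _ = lam * r ^ m := by rw [hsplit]; ring
  linarith

set_option maxHeartbeats 1000000 in
/-- Localization of the supremum in the sup-convolution (equation (4.7) of the paper):
if `w(t,x) ≤ C(1+‖x‖^k)` with `k < m`, then for every `R > 0` and `λ > 0` there is `N > 0`,
independent of `ε` and `β`, such that for `‖x‖ ≤ R` the supremum defining `w^{λ,ε,β}(t,x)`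
may be restricted to points `y` with `‖y‖ ≤ N`. -/
theorem supConv_sup_restricted
    {H : Type*} [NormedAddCommGroup H] [InnerProductSpace ℝ H] [CompleteSpace H]
    [TopologicalSpace.SeparableSpace H]
    (B : H →L[ℝ] H) (hBsa : IsSelfAdjoint B) (hBpos : ∀ x : H, 0 ≤ ⟪B x, x⟫_ℝ)
    (T C k m K : ℝ)
    (hT : 0 < T) (hC : 0 < C) (hk : 0 ≤ k) (hkm : k < m) (hm : 2 ≤ m) (hK : 0 < K)
    (w : ℝ → H → ℝ)
    (hbdd : ∀ R > (0 : ℝ), ∃ M : ℝ, ∀ t ∈ Set.Ioo (0 : ℝ) T, ∀ x : H, ‖x‖ ≤ R → |w t x| ≤ M)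
    (hgrowth : ∀ t ∈ Set.Ioo (0 : ℝ) T, ∀ x : H, w t x ≤ C * (1 + ‖x‖ ^ k)) :
    ∀ R > (0 : ℝ), ∀ lam > (0 : ℝ), ∃ N > (0 : ℝ), ∀ ε > (0 : ℝ), ∀ β > (0 : ℝ),
      ∀ t ∈ Set.Ioo (0 : ℝ) T, ∀ x : H, ‖x‖ ≤ R →
        supConv B T m K lam ε β w t x =
          sSup ((fun p : ℝ × H =>
              w p.1 p.2 - ⟪B (x - p.2), x - p.2⟫_ℝ / (2 * ε) - (t - p.1) ^ 2 / (2 * β)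
                - lam * Real.exp (2 * m * K * (T - p.1)) * ‖p.2‖ ^ m) ''
            (Set.Ioo 0 T ×ˢ Metric.closedBall (0 : H) N)) := by
  intro R hR lam hlam
  obtain ⟨M, hM⟩ := hbdd R hR
  have hT2 : (T / 2) ∈ Set.Ioo (0 : ℝ) T := ⟨by linarith, by linarith⟩
  have hM0 : 0 ≤ M := (abs_nonneg _).trans (hM (T / 2) hT2 0 (by simpa using hR.le))
  have hm0 : (0 : ℝ) < m := by linarith
  set D : ℝ := M + lam * Real.exp (2 * m * K * T) * R ^ m with hDdef
  clear_value D
  have hD0 : 0 ≤ D := hDdef ▸ add_nonneg hM0 (by positivity)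
  obtain ⟨N, hNge, hN⟩ := exists_loc C D lam k m R hC hD0 hlam hk hkm
  have hRN : R ≤ N := (le_max_left R 1).trans hNge
  have hN1 : (1 : ℝ) ≤ N := (le_max_right R 1).trans hNge
  have hN0 : (0 : ℝ) ≤ N := by linarith
  refine ⟨N, by linarith, ?_⟩
  intro ε hε β hβ t ht x hx
  unfold supConv
  set f : ℝ × H → ℝ := fun p =>
    w p.1 p.2 - ⟪B (x - p.2), x - p.2⟫_ℝ / (2 * ε) - (t - p.1) ^ 2 / (2 * β)
      - lam * Real.exp (2 * m * K * (T - p.1)) * ‖p.2‖ ^ m with hf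
  clear_value f
  -- basic nonnegativity facts
  have hfle : ∀ s ∈ Set.Ioo (0 : ℝ) T, ∀ y : H,
      f (s, y) ≤ w s y - (t - s) ^ 2 / (2 * β) - lam * ‖y‖ ^ m := by
    intro s hs y
    have hQ : 0 ≤ ⟪B (x - y), x - y⟫_ℝ := hBpos _
    have hQ' : 0 ≤ ⟪B (x - y), x - y⟫_ℝ / (2 * ε) := div_nonneg hQ (by linarith)
    have hτ : 0 ≤ (t - s) ^ 2 / (2 * β) := div_nonneg (sq_nonneg _) (by linarith)
    have hE1 : 1 ≤ Real.exp (2 * m * K * (T - s)) := by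
      apply Real.one_le_exp
      have : 0 ≤ T - s := by linarith [hs.2]
      positivity
    have hym : 0 ≤ ‖y‖ ^ m := Real.rpow_nonneg (norm_nonneg _) _
    have : lam * ‖y‖ ^ m ≤ lam * Real.exp (2 * m * K * (T - s)) * ‖y‖ ^ m :=
      mul_le_mul_of_nonneg_right (le_mul_of_one_le_right hlam.le hE1) hym
    simp only [hf]
    linarith
  have hub : ∀ p ∈ Set.Ioo (0 : ℝ) T ×ˢ (Set.univ : Set H), f p ≤ C * (1 + N ^ k) := by
    rintro ⟨s, y⟩ ⟨hs, -⟩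
    have h1 := hfle s hs y
    have hwy := hgrowth s hs y
    have hτ : 0 ≤ (t - s) ^ 2 / (2 * β) := div_nonneg (sq_nonneg _) (by linarith)
    have hym : 0 ≤ lam * ‖y‖ ^ m :=
      mul_nonneg hlam.le (Real.rpow_nonneg (norm_nonneg _) _)
    rcases le_or_gt ‖y‖ N with hyN | hyN
    · have : ‖y‖ ^ k ≤ N ^ k := Real.rpow_le_rpow (norm_nonneg _) hyN hk
      nlinarith [mul_le_mul_of_nonneg_left this hC.le, (by ring : C * (1 + N ^ k) = C + C * N ^ k), (by ring : C * (1 + ‖y‖ ^ k) = C + C * ‖y‖ ^ k)]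
    · have hloc := hN ‖y‖ hyN.le
      have hNk : 0 ≤ N ^ k := Real.rpow_nonneg hN0 _
      nlinarith [mul_nonneg hC.le hNk, hD0, (by ring : C * (1 + N ^ k) = C + C * N ^ k)]
  -- the key comparison: far points are dominated by the point (s, x)
  have hkey : ∀ s ∈ Set.Ioo (0 : ℝ) T, ∀ y : H, N ≤ ‖y‖ → f (s, y) ≤ f (s, x) := by
    intro s hs y hy
    have h1 := hfle s hs y
    have hwy := hgrowth s hs y
    have hloc := hN ‖y‖ hy
    have hwx : -M ≤ w s x := (abs_le.1 (hM s hs x hx)).1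
    have hEle : Real.exp (2 * m * K * (T - s)) ≤ Real.exp (2 * m * K * T) := by
      apply Real.exp_le_exp.2
      have h2mK : (0:ℝ) < 2 * m * K := by positivity
      nlinarith [mul_pos h2mK hs.1]
    have hxm : ‖x‖ ^ m ≤ R ^ m := Real.rpow_le_rpow (norm_nonneg x) hx hm0.le
    have hxm0 : 0 ≤ ‖x‖ ^ m := Real.rpow_nonneg (norm_nonneg _) _
    have hE0 : 0 < Real.exp (2 * m * K * (T - s)) := Real.exp_pos _
    have hEx : lam * Real.exp (2 * m * K * (T - s)) * ‖x‖ ^ m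
        ≤ lam * Real.exp (2 * m * K * T) * R ^ m :=
      mul_le_mul (mul_le_mul_of_nonneg_left hEle hlam.le) hxm hxm0 (by positivity)
    have hzero : ⟪B (x - x), x - x⟫_ℝ = (0 : ℝ) := by
      rw [sub_self, map_zero, inner_zero_left]
    have hτ : 0 ≤ (t - s) ^ 2 / (2 * β) := div_nonneg (sq_nonneg _) (by linarith)
    simp only [hf] at h1 ⊢
    rw [hzero]
    have hwyl : w s y - lam * ‖y‖ ^ m ≤ -D := by nlinarith
    have : (0:ℝ) / (2 * ε) = 0 := by ring
    rw [this]
    simp only [hDdef] at hwyl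
    linarith [h1]
  -- sup equality
  have hne_res : ((f '' (Set.Ioo 0 T ×ˢ Metric.closedBall (0 : H) N))).Nonempty :=
    ⟨f (T / 2, 0), ⟨(T / 2, 0), ⟨hT2, by simpa [Metric.mem_closedBall] using hN0⟩, rfl⟩⟩
  have hbdd_full : BddAbove (f '' (Set.Ioo 0 T ×ˢ (Set.univ : Set H))) := by
    refine ⟨C * (1 + N ^ k), ?_⟩
    rintro a ⟨p, hp, rfl⟩
    exact hub p hp
  have hsub : f '' (Set.Ioo 0 T ×ˢ Metric.closedBall (0 : H) N)
      ⊆ f '' (Set.Ioo 0 T ×ˢ (Set.univ : Set H)) :=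
    Set.image_mono (Set.prod_mono_right (Set.subset_univ _))
  have hbdd_res : BddAbove (f '' (Set.Ioo 0 T ×ˢ Metric.closedBall (0 : H) N)) :=
    hbdd_full.mono hsub
  apply le_antisymm
  · refine csSup_le (hne_res.mono hsub) ?_
    rintro a ⟨⟨s, y⟩, ⟨hs, -⟩, rfl⟩
    rcases le_or_gt ‖y‖ N with hyN | hyN
    · exact le_csSup hbdd_res ⟨(s, y), ⟨hs, by simpa [Metric.mem_closedBall] using hyN⟩, rfl⟩
    · exact (hkey s hs y hyN.le).trans
        (le_csSup hbdd_res ⟨(s, x), ⟨hs, by simpa [Metric.mem_closedBall] using hx.trans hRN⟩, rfl⟩)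
  · exact csSup_le_csSup hbdd_full hne_res hsub
end
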